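/- Let d and L be positive integers. For each t ∈ {0,…,L−1}, let W_t be a real d×d matrix, let A_t be a real d×d diagonal matrix with diagonal entries in {0,1}, set f_t(x) = A_t·W_t·x, and let Q_t : ℝᵈ → ℝᵈ be continuously differentiable. Suppose there exist reals q_t ≥ 0 and r ≥ 0 such that for every t and every x ∈ ℝᵈ: (i) every component of Q_t(f_t(x)) has absolute value at most q_t, and (ii) the linear map h ↦ f_t(x) ⊙ (D(Q_t∘f_t)(x)·h) has Euclidean operator norm at most r·‖W_t‖₂, where ⊙ is componentwise multiplication. Define two trajectories by x_{t+1} = x_t + f_t(x_t) ⊙ Q_t(f_t(x_t)) and x^ε_{t+1} = x^ε_t + f_t(x^ε_t) ⊙ Q_t(f_t(x^ε_t)) for t = 0,…,L−1. Then ‖x^ε_L − x_L‖₂ ≤ ‖x^ε_0 − x_0‖₂ · Π_{t=0}^{L−1} (1 + (q_t + r)·‖W_t‖₂). -/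

import Mathlib

/-- Componentwise (Hadamard) product of two vectors in Euclidean space. -/
noncomputable def hadamardVec {d : ℕ} (x y : EuclideanSpace ℝ (Fin d)) :
    EuclideanSpace ℝ (Fin d) :=
  (WithLp.equiv 2 (Fin d → ℝ)).symm fun i => x i * y i

lemma hadamardVec_apply {d : ℕ} (x y : EuclideanSpace ℝ (Fin d)) (i : Fin d) :
    hadamardVec x y i = x i * y i := rfl

/-- Each coordinate is bounded by the Euclidean norm. -/
lemma euclid_coord_le_norm {d : ℕ} (y : EuclideanSpace ℝ (Fin d)) (i : Fin d) :
    |y i| ≤ ‖y‖ := by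
  rw [EuclideanSpace.norm_eq]
  calc |y i| = Real.sqrt (‖y i‖ ^ 2) := by
        rw [Real.sqrt_sq (norm_nonneg _), Real.norm_eq_abs]
    _ ≤ Real.sqrt (∑ j, ‖y j‖ ^ 2) :=
        Real.sqrt_le_sqrt (Finset.single_le_sum
          (fun j _ => sq_nonneg (‖y j‖)) (Finset.mem_univ i))

/-- If every component of `y` is bounded by `c`, the Hadamard product is bounded. -/
lemma norm_hadamardVec_le {d : ℕ} {y : EuclideanSpace ℝ (Fin d)} {c : ℝ} (hc : 0 ≤ c)
    (h : ∀ i, |y i| ≤ c) (x : EuclideanSpace ℝ (Fin d)) :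
    ‖hadamardVec x y‖ ≤ c * ‖x‖ := by
  rw [EuclideanSpace.norm_eq, EuclideanSpace.norm_eq]
  have key : ∀ i : Fin d, ‖hadamardVec x y i‖ ^ 2 ≤ c ^ 2 * ‖x i‖ ^ 2 := by
    intro i
    rw [hadamardVec_apply]
    have h1 : ‖x i * y i‖ = ‖x i‖ * ‖y i‖ := norm_mul (x i) (y i)
    rw [h1, mul_pow, mul_comm (c ^ 2)]
    have h2 : ‖y i‖ ^ 2 ≤ c ^ 2 := by
      have h3 : ‖y i‖ ≤ c := by rw [Real.norm_eq_abs]; exact h i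
      exact pow_le_pow_left₀ (norm_nonneg _) h3 2
    exact mul_le_mul_of_nonneg_left h2 (sq_nonneg _)
  calc Real.sqrt (∑ i, ‖hadamardVec x y i‖ ^ 2)
      ≤ Real.sqrt (∑ i, c ^ 2 * ‖x i‖ ^ 2) :=
        Real.sqrt_le_sqrt (Finset.sum_le_sum fun i _ => key i)
    _ = c * Real.sqrt (∑ i, ‖x i‖ ^ 2) := by
        rw [← Finset.mul_sum, Real.sqrt_mul (sq_nonneg c), Real.sqrt_sq hc]

/-- Hadamard product as a continuous bilinear map. -/
noncomputable def hadamardCLM (d : ℕ) :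
    EuclideanSpace ℝ (Fin d) →L[ℝ] EuclideanSpace ℝ (Fin d) →L[ℝ] EuclideanSpace ℝ (Fin d) :=
  LinearMap.mkContinuous₂
    (LinearMap.mk₂ ℝ (fun x y => hadamardVec x y)
      (fun x x' y => by ext i; simp [hadamardVec_apply, add_mul])
      (fun c x y => by ext i; simp [hadamardVec_apply, mul_assoc])
      (fun x y y' => by ext i; simp [hadamardVec_apply, mul_add])
      (fun c x y => by ext i; simp [hadamardVec_apply]; ring))
    1
    (fun x y => by
      simp only [LinearMap.mk₂_apply, one_mul]
      calc ‖hadamardVec x y‖ ≤ ‖y‖ * ‖x‖ :=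
            norm_hadamardVec_le (norm_nonneg y) (fun i => euclid_coord_le_norm y i) x
        _ = ‖x‖ * ‖y‖ := mul_comm _ _)

lemma hadamardCLM_apply {d : ℕ} (x y : EuclideanSpace ℝ (Fin d)) :
    hadamardCLM d x y = hadamardVec x y := rfl

/-- A 0/1 diagonal matrix is a contraction. -/
lemma diag01_norm_le {d : ℕ} {a : Fin d → ℝ} (ha : ∀ i, a i = 0 ∨ a i = 1)
    (v : EuclideanSpace ℝ (Fin d)) :
    ‖Matrix.toEuclideanCLM (𝕜 := ℝ) (Matrix.diagonal a) v‖ ≤ ‖v‖ := by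
  have heq : Matrix.toEuclideanCLM (𝕜 := ℝ) (Matrix.diagonal a) v =
      hadamardVec v ((WithLp.equiv 2 (Fin d → ℝ)).symm a) := by
    ext i
    have h0 : (WithLp.equiv 2 (Fin d → ℝ)) (Matrix.toEuclideanCLM (𝕜 := ℝ)
        (Matrix.diagonal a) v) = Matrix.toLin' (Matrix.diagonal a)
          ((WithLp.equiv 2 (Fin d → ℝ)) v) := Matrix.ofLp_toEuclideanCLM _ _
    have h2 : Matrix.toEuclideanCLM (𝕜 := ℝ) (Matrix.diagonal a) v i =
        (Matrix.diagonal a).mulVec (fun j => v j) i := congrFun h0 i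
    rw [h2, Matrix.mulVec_diagonal, hadamardVec_apply, mul_comm]
    rfl
  rw [heq]
  have h3 := norm_hadamardVec_le (y := (WithLp.equiv 2 (Fin d → ℝ)).symm a) (c := 1)
    zero_le_one (fun i => by rcases ha i with h | h <;>
      simp [WithLp.equiv_symm_apply, PiLp.toLp_apply, h]) v
  simpa using h3

/-- Per-layer Lipschitz estimate. -/
lemma layer_lip {d : ℕ} (T : EuclideanSpace ℝ (Fin d) →L[ℝ] EuclideanSpace ℝ (Fin d))
    (g : EuclideanSpace ℝ (Fin d) → EuclideanSpace ℝ (Fin d))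
    (hg : Differentiable ℝ g) (q C r : ℝ) (hq : 0 ≤ q) (hC : 0 ≤ C) (hr : 0 ≤ r)
    (hT : ∀ v, ‖T v‖ ≤ C * ‖v‖)
    (hb : ∀ z i, |g z i| ≤ q)
    (hdv : ∀ z h, ‖hadamardVec (T z) (fderiv ℝ g z h)‖ ≤ r * C * ‖h‖)
    (u v : EuclideanSpace ℝ (Fin d)) :
    ‖(v + hadamardVec (T v) (g v)) - (u + hadamardVec (T u) (g u))‖ ≤
      (1 + (q + r) * C) * ‖v - u‖ := by
  set B := hadamardCLM d with hB
  set F : EuclideanSpace ℝ (Fin d) → EuclideanSpace ℝ (Fin d) :=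
    fun z => z + B (T z) (g z) with hF
  set F' : EuclideanSpace ℝ (Fin d) →
      (EuclideanSpace ℝ (Fin d) →L[ℝ] EuclideanSpace ℝ (Fin d)) :=
    fun z => ContinuousLinearMap.id ℝ _ +
      ((B (T z)).comp (fderiv ℝ g z) + (B.comp T).flip (g z)) with hF'
  have hasF : ∀ z, HasFDerivAt F (F' z) z := by
    intro z
    have h1 : HasFDerivAt (fun y : EuclideanSpace ℝ (Fin d) => (B.comp T) y)
        (B.comp T) z := (B.comp T).hasFDerivAt
    have h2 : HasFDerivAt g (fderiv ℝ g z) z := (hg z).hasFDerivAt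
    have h3 : HasFDerivAt (fun y => (B.comp T) y (g y))
        (((B.comp T) z).comp (fderiv ℝ g z) + (B.comp T).flip (g z)) z :=
      h1.clm_apply h2
    exact (hasFDerivAt_id z).add h3
  have bnd : ∀ z, ‖F' z‖ ≤ 1 + (q + r) * C := by
    intro z
    refine ContinuousLinearMap.opNorm_le_bound _ (by positivity) (fun h => ?_)
    have e1 : F' z h = h + (B (T z) (fderiv ℝ g z h) + B (T h) (g z)) := rfl
    rw [e1]
    have b1 : ‖B (T z) (fderiv ℝ g z h)‖ ≤ r * C * ‖h‖ := by
      rw [hadamardCLM_apply]; exact hdv z h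
    have b2 : ‖B (T h) (g z)‖ ≤ q * (C * ‖h‖) := by
      rw [hadamardCLM_apply]
      calc ‖hadamardVec (T h) (g z)‖ ≤ q * ‖T h‖ :=
            norm_hadamardVec_le hq (hb z) (T h)
        _ ≤ q * (C * ‖h‖) := by gcongr; exact hT h
    calc ‖h + (B (T z) (fderiv ℝ g z h) + B (T h) (g z))‖
        ≤ ‖h‖ + (‖B (T z) (fderiv ℝ g z h)‖ + ‖B (T h) (g z)‖) :=
          (norm_add_le _ _).trans (by gcongr; exact norm_add_le _ _)
      _ ≤ ‖h‖ + (r * C * ‖h‖ + q * (C * ‖h‖)) := by gcongr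
      _ = (1 + (q + r) * C) * ‖h‖ := by ring
  have main := Convex.norm_image_sub_le_of_norm_hasFDerivWithin_le
    (f := F) (f' := F') (s := Set.univ) (C := 1 + (q + r) * C)
    (fun z _ => (hasF z).hasFDerivWithinAt) (fun z _ => bnd z)
    convex_univ (Set.mem_univ u) (Set.mem_univ v)
  simpa [hF, hB, hadamardCLM_apply] using main

/-- Auxiliary multilayer bound, proved by induction on the number of layers. -/
lemma multilayer_aux (d : ℕ) (L : ℕ)
    (W : ℕ → Matrix (Fin d) (Fin d) ℝ)
    (a : ℕ → Fin d → ℝ) (ha : ∀ t < L, ∀ i, a t i = 0 ∨ a t i = 1)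
    (f : ℕ → EuclideanSpace ℝ (Fin d) → EuclideanSpace ℝ (Fin d))
    (hfdef : ∀ t < L, ∀ x, f t x =
      Matrix.toEuclideanCLM (𝕜 := ℝ) (Matrix.diagonal (a t) * W t) x)
    (Q : ℕ → EuclideanSpace ℝ (Fin d) → EuclideanSpace ℝ (Fin d))
    (hQsmooth : ∀ t < L, ContDiff ℝ 1 (Q t))
    (q : ℕ → ℝ) (r : ℝ) (hq : ∀ t < L, 0 ≤ q t) (hr : 0 ≤ r)
    (hbound : ∀ t < L, ∀ (x : EuclideanSpace ℝ (Fin d)) (i : Fin d),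
      |Q t (f t x) i| ≤ q t)
    (hderiv : ∀ t < L, ∀ (x h : EuclideanSpace ℝ (Fin d)),
      ‖hadamardVec (f t x) (fderiv ℝ (Q t ∘ f t) x h)‖ ≤
        r * ‖Matrix.toEuclideanCLM (𝕜 := ℝ) (W t)‖ * ‖h‖)
    (x xε : ℕ → EuclideanSpace ℝ (Fin d))
    (hx : ∀ t < L, x (t + 1) = x t + hadamardVec (f t (x t)) (Q t (f t (x t))))
    (hxε : ∀ t < L,
      xε (t + 1) = xε t + hadamardVec (f t (xε t)) (Q t (f t (xε t)))) :
    ‖xε L - x L‖ ≤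
      ‖xε 0 - x 0‖ *
        ∏ t ∈ Finset.range L,
          (1 + (q t + r) * ‖Matrix.toEuclideanCLM (𝕜 := ℝ) (W t)‖) := by
  induction L with
  | zero =>
    rw [Finset.range_zero, Finset.prod_empty, mul_one]
  | succ n ih =>
    have hlt : ∀ t, t < n → t < n + 1 := fun t ht => Nat.lt_succ_of_lt ht
    have hn : n < n + 1 := Nat.lt_succ_self n
    have prev := ih (fun t ht => ha t (hlt t ht)) (fun t ht => hfdef t (hlt t ht))
      (fun t ht => hQsmooth t (hlt t ht)) (fun t ht => hq t (hlt t ht))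
      (fun t ht => hbound t (hlt t ht)) (fun t ht => hderiv t (hlt t ht))
      (fun t ht => hx t (hlt t ht)) (fun t ht => hxε t (hlt t ht))
    set C : ℝ := ‖Matrix.toEuclideanCLM (𝕜 := ℝ) (W n)‖ with hCdef
    have hC : 0 ≤ C := norm_nonneg _
    set T : EuclideanSpace ℝ (Fin d) →L[ℝ] EuclideanSpace ℝ (Fin d) :=
      Matrix.toEuclideanCLM (𝕜 := ℝ) (Matrix.diagonal (a n) * W n) with hTdef
    have hfT : ∀ z, f n z = T z := fun z => hfdef n hn z
    have hfTfun : f n = fun z => T z := funext hfT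
    have hTbound : ∀ v, ‖T v‖ ≤ C * ‖v‖ := by
      intro v
      have hmul : T = Matrix.toEuclideanCLM (𝕜 := ℝ) (Matrix.diagonal (a n)) *
          Matrix.toEuclideanCLM (𝕜 := ℝ) (W n) := by
        rw [hTdef, map_mul]
      have hTv : T v = Matrix.toEuclideanCLM (𝕜 := ℝ) (Matrix.diagonal (a n))
          (Matrix.toEuclideanCLM (𝕜 := ℝ) (W n) v) := by rw [hmul]; rfl
      rw [hTv]
      calc ‖Matrix.toEuclideanCLM (𝕜 := ℝ) (Matrix.diagonal (a n))
            (Matrix.toEuclideanCLM (𝕜 := ℝ) (W n) v)‖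
          ≤ ‖Matrix.toEuclideanCLM (𝕜 := ℝ) (W n) v‖ :=
            diag01_norm_le (ha n hn) _
        _ ≤ C * ‖v‖ := (Matrix.toEuclideanCLM (𝕜 := ℝ) (W n)).le_opNorm v
    have hgdiff : Differentiable ℝ (Q n ∘ f n) := by
      rw [hfTfun]
      exact ((hQsmooth n hn).differentiable one_ne_zero).comp (T.differentiable)
    have step : ‖xε (n + 1) - x (n + 1)‖ ≤ (1 + (q n + r) * C) * ‖xε n - x n‖ := by
      rw [hx n hn, hxε n hn]
      have hb' : ∀ z i, |(Q n ∘ f n) z i| ≤ q n := fun z i => hbound n hn z i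
      have hdv' : ∀ z h, ‖hadamardVec (T z) (fderiv ℝ (Q n ∘ f n) z h)‖ ≤
          r * C * ‖h‖ := by
        intro z h
        rw [← hfT z]
        exact hderiv n hn z h
      have main := layer_lip T (Q n ∘ f n) hgdiff (q n) C r (hq n hn) hC hr hTbound
        hb' hdv' (x n) (xε n)
      simp only [Function.comp_apply] at main
      rw [← hfT (x n), ← hfT (xε n)] at main
      exact main
    have hfac : (0:ℝ) ≤ 1 + (q n + r) * C := by
      have := hq n hn; positivity
    calc ‖xε (n + 1) - x (n + 1)‖ ≤ (1 + (q n + r) * C) * ‖xε n - x n‖ := step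
      _ ≤ (1 + (q n + r) * C) * (‖xε 0 - x 0‖ *
            ∏ t ∈ Finset.range n,
              (1 + (q t + r) * ‖Matrix.toEuclideanCLM (𝕜 := ℝ) (W t)‖)) := by
          gcongr
      _ = ‖xε 0 - x 0‖ * ∏ t ∈ Finset.range (n + 1),
            (1 + (q t + r) * ‖Matrix.toEuclideanCLM (𝕜 := ℝ) (W t)‖) := by
          rw [Finset.prod_range_succ]; ring

/-- Multi-layer perturbation bound Eq. (bound1): iterating the per-layer
Lipschitz estimate over an `L`-layer residual network with multiplicative
self-attention, an initial perturbation is amplified by at most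
`Π_{t=0}^{L−1} (1 + (q_t + r)·‖W_t‖₂)`. -/
theorem attention_noise_regulator_multilayer (d L : ℕ) (hd : 0 < d) (hL : 0 < L)
    (W : ℕ → Matrix (Fin d) (Fin d) ℝ)
    (a : ℕ → Fin d → ℝ) (ha : ∀ t < L, ∀ i, a t i = 0 ∨ a t i = 1)
    (f : ℕ → EuclideanSpace ℝ (Fin d) → EuclideanSpace ℝ (Fin d))
    (hfdef : ∀ t < L, ∀ x, f t x =
      Matrix.toEuclideanCLM (𝕜 := ℝ) (Matrix.diagonal (a t) * W t) x)
    (Q : ℕ → EuclideanSpace ℝ (Fin d) → EuclideanSpace ℝ (Fin d))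
    (hQsmooth : ∀ t < L, ContDiff ℝ 1 (Q t))
    (q : ℕ → ℝ) (r : ℝ) (hq : ∀ t < L, 0 ≤ q t) (hr : 0 ≤ r)
    (hbound : ∀ t < L, ∀ (x : EuclideanSpace ℝ (Fin d)) (i : Fin d),
      |Q t (f t x) i| ≤ q t)
    (hderiv : ∀ t < L, ∀ (x h : EuclideanSpace ℝ (Fin d)),
      ‖hadamardVec (f t x) (fderiv ℝ (Q t ∘ f t) x h)‖ ≤
        r * ‖Matrix.toEuclideanCLM (𝕜 := ℝ) (W t)‖ * ‖h‖)
    (x xε : ℕ → EuclideanSpace ℝ (Fin d))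
    (hx : ∀ t < L, x (t + 1) = x t + hadamardVec (f t (x t)) (Q t (f t (x t))))
    (hxε : ∀ t < L,
      xε (t + 1) = xε t + hadamardVec (f t (xε t)) (Q t (f t (xε t)))) :
    ‖xε L - x L‖ ≤
      ‖xε 0 - x 0‖ *
        ∏ t ∈ Finset.range L,
          (1 + (q t + r) * ‖Matrix.toEuclideanCLM (𝕜 := ℝ) (W t)‖) :=
  multilayer_aux d L W a ha f hfdef Q hQsmooth q r hq hr hbound hderiv x xε hx hxε
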